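/- Let Σ be a set, d, N positive integers, f₁, …, f_d : Σ → ℝ linearly independent functions (in the vector space of all functions Σ → ℝ), P₁, …, P_d ∈ ℝ^{N×N}, and Ψ(x) = Σ_{k=1}^d f_k(x)·P_k for all x ∈ Σ. Then span{Ψ(w) : w ∈ Σ*} = span{P_{k₁}·P_{k₂}·…·P_{kₙ} : n ≥ 0, k₁,…,kₙ ∈ {1,…,d}}, spans taken in the real vector space of N×N matrices. Consequently, for any π₁, π₂ ∈ ℝ^N: π₁ Ψ(w) 𝟙 = π₂ Ψ(w) 𝟙 for all w ∈ Σ* if and only if π₁ (P_{k₁}·…·P_{kₙ}) 𝟙 = π₂ (P_{k₁}·…·P_{kₙ}) 𝟙 for all finite sequences k₁, …, kₙ ∈ {1,…,d}. -/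

import Mathlib

open Matrix

lemma span_eval_top' {α : Type*} {d : ℕ} (f : Fin d → α → ℝ)
    (hf : LinearIndependent ℝ f) :
    Submodule.span ℝ {v : EuclideanSpace ℝ (Fin d) | ∃ x : α, v = fun k => f k x} = ⊤ := by
  rw [← Submodule.orthogonal_eq_bot_iff, Submodule.eq_bot_iff]
  intro c hc
  rw [Submodule.mem_orthogonal] at hc
  have h0 : ∀ x : α, ∑ k, f k x * c k = 0 := by
    intro x
    have hm : (WithLp.toLp 2 (fun k => f k x) : EuclideanSpace ℝ (Fin d)) ∈ Submodule.span ℝ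
        {v : EuclideanSpace ℝ (Fin d) | ∃ x : α, v = fun k => f k x} :=
      Submodule.subset_span ⟨x, rfl⟩
    have := hc _ hm
    simpa [PiLp.inner_apply, RCLike.inner_apply, mul_comm] using this
  have := Fintype.linearIndependent_iff.mp hf c ?_
  · ext k
    exact this k
  · funext x
    simpa [mul_comm] using h0 x

theorem stmt13 {α : Type*} {d N : ℕ} (hd : 0 < d) (hN : 0 < N)
    (f : Fin d → α → ℝ) (hf : LinearIndependent ℝ f)
    (P : Fin d → Matrix (Fin N) (Fin N) ℝ)
    (Ψ : α → Matrix (Fin N) (Fin N) ℝ)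
    (hΨ : ∀ x, Ψ x = ∑ k, f k x • P k) :
    (Submodule.span ℝ {M : Matrix (Fin N) (Fin N) ℝ | ∃ w : List α, M = (w.map Ψ).prod}
      = Submodule.span ℝ
          {M : Matrix (Fin N) (Fin N) ℝ | ∃ ks : List (Fin d), M = (ks.map P).prod}) ∧
    ∀ π₁ π₂ : Fin N → ℝ,
      ((∀ w : List α, π₁ ⬝ᵥ ((w.map Ψ).prod *ᵥ 1) = π₂ ⬝ᵥ ((w.map Ψ).prod *ᵥ 1)) ↔
       (∀ ks : List (Fin d), π₁ ⬝ᵥ ((ks.map P).prod *ᵥ 1) = π₂ ⬝ᵥ ((ks.map P).prod *ᵥ 1))) := by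
  classical
  set A := Submodule.span ℝ {M : Matrix (Fin N) (Fin N) ℝ | ∃ w : List α, M = (w.map Ψ).prod}
    with hA
  set B := Submodule.span ℝ {M : Matrix (Fin N) (Fin N) ℝ | ∃ ks : List (Fin d), M = (ks.map P).prod}
    with hB
  -- Each P k is in the span of the Ψ x's
  have hPk : ∀ k, P k ∈ Submodule.span ℝ {M : Matrix (Fin N) (Fin N) ℝ | ∃ x : α, M = Ψ x} := by
    intro k
    let T : EuclideanSpace ℝ (Fin d) →ₗ[ℝ] Matrix (Fin N) (Fin N) ℝ :=
      { toFun := fun c => ∑ j, c j • P j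
        map_add' := by
          intro a b
          simp [add_smul, Finset.sum_add_distrib]
        map_smul' := by
          intro r a
          simp [smul_smul, Finset.smul_sum] }
    have hTk : T (WithLp.toLp 2 (Pi.single k 1)) = P k := by
      simp only [T, LinearMap.coe_mk, AddHom.coe_mk]
      rw [Finset.sum_eq_single k]
      · simp
      · intro j _ hj
        simp [Pi.single_apply, hj]
      · simp
    have hmem : (WithLp.toLp 2 (Pi.single k 1) : EuclideanSpace ℝ (Fin d)) ∈
        Submodule.span ℝ {v : EuclideanSpace ℝ (Fin d) | ∃ x : α, v = fun k => f k x} := by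
      rw [span_eval_top' f hf]; trivial
    have := Submodule.mem_map_of_mem (f := T) hmem
    rw [Submodule.map_span] at this
    rw [hTk] at this
    refine Submodule.span_mono ?_ this
    rintro M ⟨v, ⟨x, hv⟩, rfl⟩
    exact ⟨x, by simp [T, hΨ x, hv]⟩
  -- Left multiplication by Ψ x preserves A
  have hMulΨ : ∀ (x : α) (M : Matrix (Fin N) (Fin N) ℝ), M ∈ A → Ψ x * M ∈ A := by
    intro x M hM
    have : Submodule.map (LinearMap.mulLeft ℝ (Ψ x)) A ≤ A := by
      rw [hA, Submodule.map_span]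
      refine Submodule.span_mono ?_
      rintro M ⟨M', ⟨w, rfl⟩, rfl⟩
      exact ⟨x :: w, by simp [LinearMap.mulLeft_apply]⟩
    exact this (Submodule.mem_map_of_mem hM)
  -- Left multiplication by P k preserves B
  have hMulP : ∀ (k : Fin d) (M : Matrix (Fin N) (Fin N) ℝ), M ∈ B → P k * M ∈ B := by
    intro k M hM
    have : Submodule.map (LinearMap.mulLeft ℝ (P k)) B ≤ B := by
      rw [hB, Submodule.map_span]
      refine Submodule.span_mono ?_
      rintro M ⟨M', ⟨ks, rfl⟩, rfl⟩
      exact ⟨k :: ks, by simp [LinearMap.mulLeft_apply]⟩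
    exact this (Submodule.mem_map_of_mem hM)
  -- Left multiplication by P k preserves A
  have hMulPA : ∀ (k : Fin d) (M : Matrix (Fin N) (Fin N) ℝ), M ∈ A → P k * M ∈ A := by
    intro k M hM
    -- use P k ∈ span {Ψ x}
    let R : Matrix (Fin N) (Fin N) ℝ →ₗ[ℝ] Matrix (Fin N) (Fin N) ℝ :=
      LinearMap.mulRight ℝ M
    have := Submodule.mem_map_of_mem (f := R) (hPk k)
    rw [Submodule.map_span] at this
    have hle : Submodule.span ℝ (R '' {M : Matrix (Fin N) (Fin N) ℝ | ∃ x : α, M = Ψ x}) ≤ A := by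
      rw [Submodule.span_le]
      rintro _ ⟨M', ⟨x, rfl⟩, rfl⟩
      exact hMulΨ x M hM
    have h2 := hle this
    simpa [R, LinearMap.mulRight_apply] using h2
  -- span equality
  have hone : (1 : Matrix (Fin N) (Fin N) ℝ) ∈ A := Submodule.subset_span ⟨[], by simp⟩
  have honeB : (1 : Matrix (Fin N) (Fin N) ℝ) ∈ B := Submodule.subset_span ⟨[], by simp⟩
  have hBA : ∀ ks : List (Fin d), ((ks.map P).prod) ∈ A := by
    intro ks
    induction ks with
    | nil => simpa using hone
    | cons k ks ih => simpa using hMulPA k _ ih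
  have hAB : ∀ w : List α, ((w.map Ψ).prod) ∈ B := by
    intro w
    induction w with
    | nil => simpa using honeB
    | cons x w ih =>
      simp only [List.map_cons, List.prod_cons]
      rw [hΨ x, Finset.sum_mul]
      refine Submodule.sum_mem _ ?_
      intro k _
      rw [smul_mul_assoc]
      exact Submodule.smul_mem _ _ (hMulP k _ ih)
  have hspan : A = B := by
    apply le_antisymm
    · rw [hA, Submodule.span_le]
      rintro M ⟨w, rfl⟩
      exact hAB w
    · rw [hB, Submodule.span_le]
      rintro M ⟨ks, rfl⟩
      exact hBA ks
  refine ⟨hspan, ?_⟩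
  intro π₁ π₂
  let φ : Matrix (Fin N) (Fin N) ℝ →ₗ[ℝ] ℝ :=
    { toFun := fun M => π₁ ⬝ᵥ (M *ᵥ 1) - π₂ ⬝ᵥ (M *ᵥ 1)
      map_add' := by
        intro M M'
        simp [add_mulVec, dotProduct_add]
        ring
      map_smul' := by
        intro r M
        simp [smul_mulVec, dotProduct_smul, smul_eq_mul]
        ring }
  have key : ∀ (S : Set (Matrix (Fin N) (Fin N) ℝ)),
      (∀ M ∈ S, φ M = 0) ↔ Submodule.span ℝ S ≤ LinearMap.ker φ := by
    intro S
    rw [Submodule.span_le]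
    constructor
    · intro h M hM; exact h M hM
    · intro h M hM; exact h hM
  constructor
  · intro h ks
    have h1 : A ≤ LinearMap.ker φ := by
      rw [hA, Submodule.span_le]
      rintro M ⟨w, rfl⟩
      simp only [SetLike.mem_coe, LinearMap.mem_ker]
      have := h w
      simp [φ, this]
    have h2 : ((ks.map P).prod) ∈ LinearMap.ker φ := h1 (hBA ks)
    have := LinearMap.mem_ker.mp h2
    simp only [φ, LinearMap.coe_mk, AddHom.coe_mk] at this
    linarith
  · intro h w
    have h1 : B ≤ LinearMap.ker φ := by
      rw [hB, Submodule.span_le]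
      rintro M ⟨ks, rfl⟩
      simp only [SetLike.mem_coe, LinearMap.mem_ker]
      have := h ks
      simp [φ, this]
    have h2 : ((w.map Ψ).prod) ∈ LinearMap.ker φ := h1 (hAB w)
    have := LinearMap.mem_ker.mp h2
    simp only [φ, LinearMap.coe_mk, AddHom.coe_mk] at this
    linarith
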